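/- Let P be a probability measure on ℝ^d with bounded support and a bounded density with respect to Lebesgue measure. Fix distinct centers μ = (μ_1,…,μ_k). Then there exists a constant A > 0 and a neighborhood K of μ such that for all μ' ∈ K, P(C_r(μ) Δ C_r(μ')) ≤ A‖μ − μ'‖ for every r ≤ k, where C_r denotes Voronoi cells. -/

import Mathlib

open MeasureTheory
open scoped symmDiff ENNReal RealInnerProductSpace

set_option maxHeartbeats 1000000

/-- The (closed) Voronoi cell of the `r`-th center. -/
def voronoiCell {d k : ℕ} (μ : Fin k → EuclideanSpace ℝ (Fin d)) (r : Fin k) :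
    Set (EuclideanSpace ℝ (Fin d)) :=
  {x | ∀ s, dist x (μ r) ≤ dist x (μ s)}

lemma slab_volume_le {d : ℕ} (v : EuclideanSpace ℝ (Fin d)) (hv : v ≠ 0) (a b R : ℝ) :
    volume {x : EuclideanSpace ℝ (Fin d) | ⟪x, v⟫ ∈ Set.Icc a b ∧ ‖x‖ ≤ R}
      ≤ ENNReal.ofReal ((b - a) / ‖v‖) * ENNReal.ofReal (2 * R) ^ (d - 1) := by
  have hd : 0 < d := by
    rcases Nat.eq_zero_or_pos d with h | h
    · subst h; exact absurd (Subsingleton.elim v 0) hv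
    · exact h
  have hvn : (0 : ℝ) < ‖v‖ := norm_pos_iff.2 hv
  set u : EuclideanSpace ℝ (Fin d) := ‖v‖⁻¹ • v with hu
  have hun : ‖u‖ = 1 := by
    rw [hu, norm_smul, norm_inv, norm_norm, inv_mul_cancel₀ hvn.ne']
  have hcard : Module.finrank ℝ (EuclideanSpace ℝ (Fin d)) = Fintype.card (Fin d) := by
    simp [finrank_euclideanSpace]
  have horth : Orthonormal ℝ (Set.restrict {(⟨0, hd⟩ : Fin d)} (fun _ : Fin d => u)) := by
    constructor
    · intro i; exact hun
    · intro i j hij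
      exact absurd (Subsingleton.elim i j) hij
  obtain ⟨bas, hbas⟩ := horth.exists_orthonormalBasis_extension_of_card_eq hcard
  have hb0 : bas ⟨0, hd⟩ = u := hbas _ rfl
  set a' := a / ‖v‖
  set b' := b / ‖v‖
  set sets : Fin d → Set ℝ := fun i => if i = ⟨0, hd⟩ then Set.Icc a' b' else Set.Icc (-R) R
  have hsub : {x : EuclideanSpace ℝ (Fin d) | ⟪x, v⟫ ∈ Set.Icc a b ∧ ‖x‖ ≤ R}
      ⊆ bas.repr ⁻¹' (((MeasurableEquiv.toLp 2 (Fin d → ℝ)).symm) ⁻¹' Set.univ.pi sets) := by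
    rintro x ⟨⟨hxa, hxb⟩, hxR⟩
    intro i _
    show bas.repr x i ∈ sets i
    have hrepr : bas.repr x i = ⟪bas i, x⟫ := bas.repr_apply_apply x i
    by_cases hi : i = ⟨0, hd⟩
    · subst hi
      rw [hrepr, hb0]
      have : ⟪u, x⟫ = ‖v‖⁻¹ * ⟪x, v⟫ := by
        rw [hu, real_inner_smul_left, real_inner_comm]
      simp only [sets, if_pos rfl]
      rw [this]
      constructor
      · calc a' = ‖v‖⁻¹ * a := by rw [inv_mul_eq_div]
        _ ≤ ‖v‖⁻¹ * ⟪x, v⟫ := by gcongr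
      · calc ‖v‖⁻¹ * ⟪x, v⟫ ≤ ‖v‖⁻¹ * b := by gcongr
        _ = b' := by rw [inv_mul_eq_div]
    · simp only [sets, if_neg hi]
      rw [Set.mem_Icc, ← abs_le, hrepr]
      calc |⟪bas i, x⟫| ≤ ‖bas i‖ * ‖x‖ := abs_real_inner_le_norm _ _
      _ = ‖x‖ := by rw [bas.orthonormal.1 i, one_mul]
      _ ≤ R := hxR
  have hmeas : MeasurableSet (Set.univ.pi sets) := by
    refine MeasurableSet.univ_pi fun i => ?_
    by_cases hi : i = ⟨0, hd⟩ <;> simp [sets, hi, measurableSet_Icc]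
  calc volume {x : EuclideanSpace ℝ (Fin d) | ⟪x, v⟫ ∈ Set.Icc a b ∧ ‖x‖ ≤ R}
      ≤ volume (bas.repr ⁻¹' (((MeasurableEquiv.toLp 2 (Fin d → ℝ)).symm) ⁻¹' Set.univ.pi sets)) :=
        measure_mono hsub
    _ = volume (((MeasurableEquiv.toLp 2 (Fin d → ℝ)).symm) ⁻¹' Set.univ.pi sets) :=
        bas.measurePreserving_repr.measure_preimage
          ((((MeasurableEquiv.toLp 2 (Fin d → ℝ)).symm).measurable hmeas).nullMeasurableSet)
    _ = volume (Set.univ.pi sets) :=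
        (EuclideanSpace.volume_preserving_symm_measurableEquiv_toLp (Fin d)).measure_preimage
          hmeas.nullMeasurableSet
    _ = ∏ i, volume (sets i) := volume_pi_pi sets
    _ ≤ ENNReal.ofReal ((b - a) / ‖v‖) * ENNReal.ofReal (2 * R) ^ (d - 1) := by
        rw [← Finset.prod_erase_mul _ _ (Finset.mem_univ (⟨0, hd⟩ : Fin d))]
        have h1 : volume (sets ⟨0, hd⟩) = ENNReal.ofReal ((b - a) / ‖v‖) := by
          simp only [sets, if_pos rfl, Real.volume_Icc]
          congr 1
          simp only [a', b']
          ring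
        have h2 : ∀ i ∈ Finset.univ.erase (⟨0, hd⟩ : Fin d),
            volume (sets i) = ENNReal.ofReal (2 * R) := by
          intro i hi
          simp only [sets, if_neg (Finset.mem_erase.1 hi).1, Real.volume_Icc]
          congr 1; ring
        rw [Finset.prod_congr rfl h2, Finset.prod_const, h1,
          Finset.card_erase_of_mem (Finset.mem_univ _), Finset.card_univ, Fintype.card_fin,
          mul_comm]

lemma withDensity_set_le {d : ℕ} (f : EuclideanSpace ℝ (Fin d) → ℝ≥0∞) (M : ℝ≥0∞)
    (hM : ∀ x, f x ≤ M) (R : ℝ) (hs : Function.support f ⊆ Metric.closedBall 0 R)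
    (T : Set (EuclideanSpace ℝ (Fin d))) (hT : MeasurableSet T) :
    MeasureTheory.volume.withDensity f T ≤ M * volume (T ∩ Metric.closedBall 0 R) := by
  rw [withDensity_apply f hT]
  have hb : ∀ x, f x ≤ (Metric.closedBall (0 : EuclideanSpace ℝ (Fin d)) R).indicator
      (fun _ => M) x := by
    intro x
    by_cases hx : x ∈ Metric.closedBall (0 : EuclideanSpace ℝ (Fin d)) R
    · simp [hx, hM x]
    · have : f x = 0 := Function.notMem_support.1 fun h => hx (hs h)
      simp [hx, this]
  calc ∫⁻ x in T, f x ≤ ∫⁻ x in T,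
        (Metric.closedBall (0 : EuclideanSpace ℝ (Fin d)) R).indicator (fun _ => M) x :=
      lintegral_mono hb
    _ = ∫⁻ _ in Metric.closedBall (0 : EuclideanSpace ℝ (Fin d)) R, M ∂(volume.restrict T) :=
      lintegral_indicator measurableSet_closedBall _
    _ = M * (volume.restrict T) (Metric.closedBall 0 R) := setLIntegral_const _ _
    _ = M * volume (T ∩ Metric.closedBall 0 R) := by
      rw [Measure.restrict_apply measurableSet_closedBall, Set.inter_comm]

/-- Let `P` be a probability measure on `ℝ^d` with bounded support and bounded density
with respect to Lebesgue measure, and let `μ` be a tuple of distinct centers.  Then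
there are `A > 0` and a neighborhood of `μ` on which
`P(C_r(μ) Δ C_r(μ')) ≤ A ‖μ − μ'‖` for every `r`. -/
theorem voronoi_symmDiff_prob_lipschitz {d k : ℕ}
    (P : Measure (EuclideanSpace ℝ (Fin d))) [IsProbabilityMeasure P]
    (f : EuclideanSpace ℝ (Fin d) → ℝ≥0∞)
    (hPf : P = MeasureTheory.volume.withDensity f)
    (hfbdd : ∃ M : ℝ≥0∞, M < ⊤ ∧ ∀ x, f x ≤ M)
    (hsupp : Bornology.IsBounded (Function.support f))
    (μ : Fin k → EuclideanSpace ℝ (Fin d)) (hμ : Function.Injective μ) :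
    ∃ A > (0 : ℝ), ∃ ε > (0 : ℝ), ∀ μ' : Fin k → EuclideanSpace ℝ (Fin d),
      dist μ μ' < ε → ∀ r,
        (P (voronoiCell μ r ∆ voronoiCell μ' r)).toReal ≤ A * dist μ μ' := by
  obtain ⟨M, hMfin, hM⟩ := hfbdd
  obtain ⟨R0, hR0⟩ := hsupp.subset_closedBall 0
  set R : ℝ := max R0 1 with hRdef
  have hR1 : (1 : ℝ) ≤ R := le_max_right _ _
  have hsuppR : Function.support f ⊆ Metric.closedBall 0 R :=
    hR0.trans (Metric.closedBall_subset_closedBall (le_max_left _ _))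
  by_cases hk : k ≤ 1
  · refine ⟨1, one_pos, 1, one_pos, fun μ' _ r => ?_⟩
    have hcell : ∀ ν : Fin k → EuclideanSpace ℝ (Fin d), voronoiCell ν r = Set.univ := by
      intro ν; ext x
      simp only [voronoiCell, Set.mem_setOf_eq, Set.mem_univ, iff_true]
      intro s
      have h1 := s.isLt; have h2 := r.isLt
      have hs : s = r := Fin.ext (by omega)
      rw [hs]
    rw [hcell μ, hcell μ', symmDiff_self]
    simp only [Set.bot_eq_empty, measure_empty, ENNReal.toReal_zero, one_mul]
    exact dist_nonneg
  push_neg at hk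
  -- minimal distance between centers
  obtain ⟨δmin, hδminpos, hδminle⟩ :
      ∃ δmin : ℝ, 0 < δmin ∧ ∀ r s : Fin k, r ≠ s → δmin ≤ dist (μ r) (μ s) := by
    classical
    set F : Finset (Fin k × Fin k) := Finset.univ.filter fun p => p.1 ≠ p.2 with hF
    have hFne : F.Nonempty := ⟨(⟨0, by omega⟩, ⟨1, by omega⟩), by simp [hF, Fin.ext_iff]⟩
    obtain ⟨p, hp, hmin⟩ := F.exists_min_image (fun p => dist (μ p.1) (μ p.2)) hFne
    refine ⟨dist (μ p.1) (μ p.2), ?_, ?_⟩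
    · exact dist_pos.2 fun h => (Finset.mem_filter.1 hp).2 (hμ h)
    · intro r s hrs
      have hmem : (r, s) ∈ F := by simp [hF, hrs]
      exact hmin (r, s) hmem
  set C : ℝ := R + ‖μ‖ with hC
  have hC1 : (1 : ℝ) ≤ C := le_trans hR1 (le_add_of_nonneg_right (norm_nonneg μ))
  obtain ⟨A, hA⟩ : ∃ A' : ℝ, A' = 1 + k * M.toReal * (4 * C / δmin) * (2 * R) ^ (d - 1) :=
    ⟨_, rfl⟩
  have hX0 : 0 ≤ k * M.toReal * (4 * C / δmin) * (2 * R) ^ (d - 1) := by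
    have h4 : (0 : ℝ) ≤ 4 * C / δmin := div_nonneg (by linarith) hδminpos.le
    exact mul_nonneg (mul_nonneg (mul_nonneg (Nat.cast_nonneg k) ENNReal.toReal_nonneg) h4)
      (pow_nonneg (by linarith) _)
  have hApos : (0 : ℝ) < A := by rw [hA]; linarith
  refine ⟨A, hApos, 1, one_pos, fun μ' hdist r => ?_⟩
  set δ := dist μ μ' with hδ
  have hδ0 : 0 ≤ δ := dist_nonneg
  have hδi : ∀ i, dist (μ i) (μ' i) ≤ δ := fun i => dist_le_pi_dist μ μ' i
  set Tslab : Fin k → Set (EuclideanSpace ℝ (Fin d)) := fun s =>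
    {x | ⟪x, μ r - μ s⟫ ∈ Set.Icc ((‖μ r‖ ^ 2 - ‖μ s‖ ^ 2) / 2 - 2 * δ * C)
      ((‖μ r‖ ^ 2 - ‖μ s‖ ^ 2) / 2 + 2 * δ * C)} with hTdef
  -- containment of symmetric difference
  have hkey : voronoiCell μ r ∆ voronoiCell μ' r ⊆
      (Metric.closedBall (0 : EuclideanSpace ℝ (Fin d)) R)ᶜ
        ∪ ⋃ s ∈ Finset.univ.erase r, Tslab s := by
    intro x hx
    by_cases hxR : x ∈ Metric.closedBall (0 : EuclideanSpace ℝ (Fin d)) R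
    · right
      rw [mem_closedBall_zero_iff] at hxR
      have hdd : ∀ i, |dist x (μ i) - dist x (μ' i)| ≤ δ := by
        intro i
        have h := abs_dist_sub_le (μ i) (μ' i) x
        rw [dist_comm (μ i) x, dist_comm (μ' i) x] at h
        exact h.trans (hδi i)
      rw [Set.mem_symmDiff] at hx
      have hmain : ∃ s, s ≠ r ∧ |dist x (μ s) - dist x (μ r)| ≤ 2 * δ := by
        rcases hx with ⟨hx1, hx2⟩ | ⟨hx1, hx2⟩
        · simp only [voronoiCell, Set.mem_setOf_eq, not_forall, not_le] at hx2
          obtain ⟨s, hs⟩ := hx2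
          have hsr : s ≠ r := fun h => by subst h; exact lt_irrefl _ hs
          have h1 : dist x (μ r) ≤ dist x (μ s) := hx1 s
          obtain ⟨h2l, h2u⟩ := abs_le.1 (hdd s)
          obtain ⟨h3l, h3u⟩ := abs_le.1 (hdd r)
          exact ⟨s, hsr, abs_le.2 ⟨by linarith, by linarith⟩⟩
        · simp only [voronoiCell, Set.mem_setOf_eq, not_forall, not_le] at hx2
          obtain ⟨s, hs⟩ := hx2
          have hsr : s ≠ r := fun h => by subst h; exact lt_irrefl _ hs
          have h1 : dist x (μ' r) ≤ dist x (μ' s) := hx1 s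
          obtain ⟨h2l, h2u⟩ := abs_le.1 (hdd s)
          obtain ⟨h3l, h3u⟩ := abs_le.1 (hdd r)
          exact ⟨s, hsr, abs_le.2 ⟨by linarith, by linarith⟩⟩
      obtain ⟨s, hsr, habs⟩ := hmain
      refine Set.mem_biUnion (Finset.mem_erase.2 ⟨hsr, Finset.mem_univ s⟩) ?_
      have hds : dist x (μ s) ≤ C := by
        have := dist_triangle x 0 (μ s)
        rw [dist_zero_right, dist_zero_left] at this
        have h2 : ‖μ s‖ ≤ ‖μ‖ := norm_le_pi_norm μ s
        rw [hC]; linarith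
      have hdr : dist x (μ r) ≤ C := by
        have := dist_triangle x 0 (μ r)
        rw [dist_zero_right, dist_zero_left] at this
        have h2 : ‖μ r‖ ≤ ‖μ‖ := norm_le_pi_norm μ r
        rw [hC]; linarith
      have hds0 : 0 ≤ dist x (μ s) := dist_nonneg
      have hdr0 : 0 ≤ dist x (μ r) := dist_nonneg
      obtain ⟨hl, hu⟩ := abs_le.1 habs
      have hinner : ⟪x, μ r - μ s⟫ =
          (dist x (μ s) ^ 2 - dist x (μ r) ^ 2) / 2 + (‖μ r‖ ^ 2 - ‖μ s‖ ^ 2) / 2 := by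
        rw [dist_eq_norm, dist_eq_norm, norm_sub_sq_real, norm_sub_sq_real, inner_sub_right]
        ring
      have hsum0 : (0 : ℝ) ≤ dist x (μ s) + dist x (μ r) := by linarith
      have hp1 : (dist x (μ s) - dist x (μ r)) * (dist x (μ s) + dist x (μ r))
          ≤ 2 * δ * (dist x (μ s) + dist x (μ r)) := mul_le_mul_of_nonneg_right hu hsum0
      have hp2 : (dist x (μ r) - dist x (μ s)) * (dist x (μ s) + dist x (μ r))
          ≤ 2 * δ * (dist x (μ s) + dist x (μ r)) :=
        mul_le_mul_of_nonneg_right (by linarith) hsum0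
      have hp3 : 2 * δ * (dist x (μ s) + dist x (μ r)) ≤ 2 * δ * (2 * C) :=
        mul_le_mul_of_nonneg_left (by linarith) (by linarith)
      simp only [hTdef, Set.mem_setOf_eq, Set.mem_Icc]
      rw [hinner]
      constructor
      · nlinarith
      · nlinarith
    · left; exact hxR
  -- measurability of the slabs
  have hTmeas : ∀ s, MeasurableSet (Tslab s) := by
    intro s
    have hcont : Continuous fun x : EuclideanSpace ℝ (Fin d) => ⟪x, μ r - μ s⟫ :=
      continuous_id.inner continuous_const
    exact hcont.measurable measurableSet_Icc
  rw [hPf]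
  -- the complement of the ball has measure zero
  have hcomp : MeasureTheory.volume.withDensity f
      ((Metric.closedBall (0 : EuclideanSpace ℝ (Fin d)) R)ᶜ) = 0 := by
    refine le_antisymm ?_ zero_le
    have h1 := withDensity_set_le f M hM R hsuppR
      ((Metric.closedBall (0 : EuclideanSpace ℝ (Fin d)) R)ᶜ) measurableSet_closedBall.compl
    rw [Set.compl_inter_self, measure_empty, mul_zero] at h1
    exact h1
  -- bound each slab
  set t : ℝ≥0∞ := M * (ENNReal.ofReal (4 * δ * C / δmin) * ENNReal.ofReal (2 * R) ^ (d - 1))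
    with ht
  have hslab : ∀ s ∈ Finset.univ.erase r,
      MeasureTheory.volume.withDensity f (Tslab s) ≤ t := by
    intro s hs
    obtain hsr := (Finset.mem_erase.1 hs).1
    have hsv : μ r - μ s ≠ 0 := sub_ne_zero.2 fun h => hsr (hμ h).symm
    have hnv : δmin ≤ ‖μ r - μ s‖ := by
      rw [← dist_eq_norm]
      exact hδminle r s fun h => hsr h.symm
    calc MeasureTheory.volume.withDensity f (Tslab s)
        ≤ M * volume (Tslab s ∩ Metric.closedBall 0 R) :=
          withDensity_set_le f M hM R hsuppR _ (hTmeas s)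
      _ ≤ t := by
          rw [ht]
          gcongr
          calc volume (Tslab s ∩ Metric.closedBall 0 R)
              ≤ volume {x : EuclideanSpace ℝ (Fin d) |
                  ⟪x, μ r - μ s⟫ ∈ Set.Icc ((‖μ r‖ ^ 2 - ‖μ s‖ ^ 2) / 2 - 2 * δ * C)
                    ((‖μ r‖ ^ 2 - ‖μ s‖ ^ 2) / 2 + 2 * δ * C) ∧ ‖x‖ ≤ R} := by
                refine measure_mono ?_
                rintro x ⟨h1, h2⟩
                exact ⟨h1, mem_closedBall_zero_iff.1 h2⟩
            _ ≤ ENNReal.ofReal ((((‖μ r‖ ^ 2 - ‖μ s‖ ^ 2) / 2 + 2 * δ * C)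
                  - ((‖μ r‖ ^ 2 - ‖μ s‖ ^ 2) / 2 - 2 * δ * C)) / ‖μ r - μ s‖)
                * ENNReal.ofReal (2 * R) ^ (d - 1) := slab_volume_le _ hsv _ _ _
            _ ≤ ENNReal.ofReal (4 * δ * C / δmin) * ENNReal.ofReal (2 * R) ^ (d - 1) := by
                have he : ((‖μ r‖ ^ 2 - ‖μ s‖ ^ 2) / 2 + 2 * δ * C)
                    - ((‖μ r‖ ^ 2 - ‖μ s‖ ^ 2) / 2 - 2 * δ * C) = 4 * δ * C := by ring
                have h40 : (0 : ℝ) ≤ 4 * δ * C := by nlinarith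
                refine mul_le_mul_left (ENNReal.ofReal_le_ofReal ?_) _
                rw [he]
                exact div_le_div_of_nonneg_left h40 hδminpos hnv
  -- put everything together
  have hbound : MeasureTheory.volume.withDensity f (voronoiCell μ r ∆ voronoiCell μ' r)
      ≤ ENNReal.ofReal (A * δ) := by
    calc MeasureTheory.volume.withDensity f (voronoiCell μ r ∆ voronoiCell μ' r)
        ≤ MeasureTheory.volume.withDensity f
            ((Metric.closedBall (0 : EuclideanSpace ℝ (Fin d)) R)ᶜ
              ∪ ⋃ s ∈ Finset.univ.erase r, Tslab s) := measure_mono hkey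
      _ ≤ MeasureTheory.volume.withDensity f
            ((Metric.closedBall (0 : EuclideanSpace ℝ (Fin d)) R)ᶜ)
          + MeasureTheory.volume.withDensity f (⋃ s ∈ Finset.univ.erase r, Tslab s) :=
          measure_union_le _ _
      _ = MeasureTheory.volume.withDensity f (⋃ s ∈ Finset.univ.erase r, Tslab s) := by
          rw [hcomp, zero_add]
      _ ≤ ∑ s ∈ Finset.univ.erase r, MeasureTheory.volume.withDensity f (Tslab s) :=
          measure_biUnion_finset_le _ _
      _ ≤ (Finset.univ.erase r).card • t := Finset.sum_le_card_nsmul _ _ t hslab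
      _ ≤ (k : ℝ≥0∞) * t := by
          rw [nsmul_eq_mul]
          refine mul_le_mul_left ?_ t
          exact_mod_cast le_trans (Finset.card_erase_le) (by simp)
      _ ≤ ENNReal.ofReal (A * δ) := by
          have h4 : (0 : ℝ) ≤ 4 * δ * C / δmin :=
            div_nonneg (by nlinarith) hδminpos.le
          have hMt : (0 : ℝ) ≤ M.toReal := ENNReal.toReal_nonneg
          rw [ht, ← ENNReal.ofReal_toReal hMfin.ne, ← ENNReal.ofReal_pow (by linarith),
            ← ENNReal.ofReal_mul h4, ← ENNReal.ofReal_mul hMt,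
            ← ENNReal.ofReal_natCast k, ← ENNReal.ofReal_mul (Nat.cast_nonneg k)]
          apply ENNReal.ofReal_le_ofReal
          have he : (k : ℝ) * (M.toReal * (4 * δ * C / δmin * (2 * R) ^ (d - 1)))
              = (k * M.toReal * (4 * C / δmin) * (2 * R) ^ (d - 1)) * δ := by ring
          rw [he]
          have hAle : (k : ℝ) * M.toReal * (4 * C / δmin) * (2 * R) ^ (d - 1) ≤ A := by
            rw [hA]; linarith
          exact mul_le_mul_of_nonneg_right hAle hδ0
  have hAδ : (0 : ℝ) ≤ A * δ := mul_nonneg hApos.le hδ0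
  exact ENNReal.toReal_le_of_le_ofReal hAδ hbound
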